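/- Let t > 0 and let β < Ψ(t). Then for every sequence γ : ℕ → ℂ such that the Hankel matrix {γ_{j+k}}_{j,k≥0} belongs to the injective tensor product ℓ¹⊗̌ℓ¹, one has ∑_{k≥0} |γ_k|^t (1+k)^β < ∞. -/

import Mathlib

open Filter Finset

/-- The Hankel matrix `{γ_{j+k}}` belongs to the injective tensor product `ℓ¹ ⊗̌ ℓ¹`:
the partial bilinear sums against sequences in the unit ball of `ℓ^∞` are uniformly bounded. -/
def HankelInInj (γ : ℕ → ℂ) : Prop :=
  ∃ C : ℝ, ∀ (N : ℕ) (x y : ℕ → ℂ), (∀ j, ‖x j‖ ≤ 1) → (∀ k, ‖y k‖ ≤ 1) →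
    ‖∑ j ∈ Finset.range (N + 1), ∑ k ∈ Finset.range (N + 1), γ (j + k) * x j * y k‖ ≤ C

/-- The function `Ψ` of Pełczyński–Sukochev: `Ψ(t) = (3/2)t - 1` for `t ≤ 2`, `Ψ(t) = t` for `t > 2`. -/
noncomputable def Psi (t : ℝ) : ℝ := if t ≤ 2 then 3 / 2 * t - 1 else t


open Complex

lemma sum_geom_exp (M : ℕ) (hM : 0 < M) (d : ℤ) (hd : d ≠ 0) (hlt : d.natAbs < M) :
    ∑ r ∈ range M, Complex.exp (2 * (Real.pi : ℂ) * I * d / M) ^ r = 0 := by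
  have hMC : (M : ℂ) ≠ 0 := Nat.cast_ne_zero.mpr hM.ne'
  set x := Complex.exp (2 * (Real.pi : ℂ) * I * d / M) with hx
  have hx1 : x ≠ 1 := by
    intro h
    rw [hx, Complex.exp_eq_one_iff] at h
    obtain ⟨k, hk⟩ := h
    have h2 : (2 * (Real.pi : ℂ) * I) ≠ 0 := by
      simp [Real.pi_ne_zero, Complex.I_ne_zero]
    have hdk : (d : ℂ) = k * M := by
      field_simp at hk
      have : (d : ℂ) * (2 * (Real.pi : ℂ) * I) = (k * M) * (2 * (Real.pi : ℂ) * I) := by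
        ring_nf
        ring_nf at hk
        linear_combination (2 * (Real.pi : ℂ) * I) * hk
      exact mul_right_cancel₀ h2 this
    have hdk' : d = k * M := by exact_mod_cast hdk
    rcases eq_or_ne k 0 with rfl | hk0
    · simp at hdk'; exact hd hdk'
    · have : (M : ℤ) ≤ d.natAbs := by
        rw [hdk']
        calc (M : ℤ) = 1 * M := (one_mul _).symm
        _ ≤ |k| * M := by
          apply mul_le_mul_of_nonneg_right _ (by positivity)
          exact Int.one_le_abs hk0
        _ = |k * M| := by rw [abs_mul]; simp
        _ = ((k * M).natAbs : ℤ) := by rw [Int.abs_eq_natAbs]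
      omega
  rw [geom_sum_eq hx1]
  have hxM : x ^ M = 1 := by
    rw [hx, ← Complex.exp_nat_mul]
    have : (M : ℂ) * (2 * (Real.pi : ℂ) * I * d / M) = d * (2 * (Real.pi : ℂ) * I) := by
      field_simp
    rw [this, Complex.exp_int_mul_two_pi_mul_I]
  rw [hxM]; simp

lemma parseval (M : ℕ) (hM : 0 < M) (a : ℕ → ℂ) :
    ∑ r ∈ range M, ‖∑ n ∈ range M, a n * Complex.exp (2 * (Real.pi : ℂ) * I * (n * r) / M)‖ ^ 2
      = M * ∑ n ∈ range M, ‖a n‖ ^ 2 := by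
  have key : ∀ z : ℂ, ((‖z‖ ^ 2 : ℝ) : ℂ) = z * (starRingEnd ℂ) z := by
    intro z
    rw [Complex.mul_conj]
    norm_cast
    rw [Complex.sq_norm]
  have hMC : (M : ℂ) ≠ 0 := Nat.cast_ne_zero.mpr hM.ne'
  -- orthogonality
  have orth : ∀ n ∈ range M, ∀ m ∈ range M,
      ∑ r ∈ range M, Complex.exp (2 * (Real.pi : ℂ) * I * (n * r) / M) *
        (starRingEnd ℂ) (Complex.exp (2 * (Real.pi : ℂ) * I * (m * r) / M))
      = if n = m then (M : ℂ) else 0 := by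
    intro n hn m hm
    have hconj : ∀ r : ℕ, Complex.exp (2 * (Real.pi : ℂ) * I * (n * r) / M) *
        (starRingEnd ℂ) (Complex.exp (2 * (Real.pi : ℂ) * I * (m * r) / M))
        = Complex.exp (2 * (Real.pi : ℂ) * I * (((n : ℤ) - m) : ℤ) / M) ^ r := by
      intro r
      rw [← Complex.exp_conj, ← Complex.exp_add, ← Complex.exp_nat_mul]
      congr 1
      have : (starRingEnd ℂ) (2 * (Real.pi : ℂ) * I * (m * r) / M)
          = -(2 * (Real.pi : ℂ) * I * (m * r) / M) := by
        simp only [map_div₀, map_mul, map_ofNat, map_natCast, Complex.conj_I, Complex.conj_ofReal]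
        ring
      rw [this]
      push_cast
      field_simp
      ring
    simp_rw [hconj]
    by_cases h : n = m
    · subst h
      simp
    · rw [if_neg h]
      apply sum_geom_exp M hM
      · simp only [sub_ne_zero]; exact_mod_cast h
      · simp only [mem_range] at hn hm
        omega
  -- complex-valued identity
  have main : ((∑ r ∈ range M, ‖∑ n ∈ range M,
      a n * Complex.exp (2 * (Real.pi : ℂ) * I * (n * r) / M)‖ ^ 2 : ℝ) : ℂ)
      = (M : ℂ) * ∑ n ∈ range M, ((‖a n‖ ^ 2 : ℝ) : ℂ) := by
    push_cast
    calc (∑ r ∈ range M, (‖∑ n ∈ range M,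
        a n * Complex.exp (2 * (Real.pi : ℂ) * I * (n * r) / M)‖ : ℂ) ^ 2)
        = ∑ r ∈ range M, ((∑ n ∈ range M,
            a n * Complex.exp (2 * (Real.pi : ℂ) * I * (n * r) / M)) *
          (starRingEnd ℂ) (∑ n ∈ range M,
            a n * Complex.exp (2 * (Real.pi : ℂ) * I * (n * r) / M))) := by
          refine Finset.sum_congr rfl fun r _ => ?_
          rw [← key]; push_cast; ring
      _ = ∑ r ∈ range M, ∑ n ∈ range M, ∑ m ∈ range M,
            (a n * (starRingEnd ℂ) (a m)) *
            (Complex.exp (2 * (Real.pi : ℂ) * I * (n * r) / M) *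
              (starRingEnd ℂ) (Complex.exp (2 * (Real.pi : ℂ) * I * (m * r) / M))) := by
          refine Finset.sum_congr rfl fun r _ => ?_
          rw [map_sum, Finset.sum_mul_sum]
          refine Finset.sum_congr rfl fun n _ => Finset.sum_congr rfl fun m _ => ?_
          rw [map_mul]; ring
      _ = ∑ n ∈ range M, ∑ m ∈ range M,
            (a n * (starRingEnd ℂ) (a m)) *
            ∑ r ∈ range M, (Complex.exp (2 * (Real.pi : ℂ) * I * (n * r) / M) *
              (starRingEnd ℂ) (Complex.exp (2 * (Real.pi : ℂ) * I * (m * r) / M))) := by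
          rw [Finset.sum_comm]
          refine Finset.sum_congr rfl fun n _ => ?_
          rw [Finset.sum_comm]
          refine Finset.sum_congr rfl fun m _ => ?_
          rw [Finset.mul_sum]
      _ = ∑ n ∈ range M, (a n * (starRingEnd ℂ) (a n)) * M := by
          refine Finset.sum_congr rfl fun n hn => ?_
          rw [Finset.sum_eq_single n]
          · rw [orth n hn n hn, if_pos rfl]
          · intro m hm hmn
            rw [orth n hn m hm, if_neg (Ne.symm hmn), mul_zero]
          · intro h; exact absurd hn h
      _ = (M : ℂ) * ∑ n ∈ range M, ((‖a n‖ : ℂ) ^ 2) := by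
          rw [Finset.mul_sum, Finset.sum_congr rfl fun n _ => ?_]
          rw [← key]; push_cast; ring
  have := main
  rw [show ((M : ℂ) * ∑ n ∈ range M, ((‖a n‖ ^ 2 : ℝ) : ℂ))
      = (((M : ℝ) * ∑ n ∈ range M, ‖a n‖ ^ 2 : ℝ) : ℂ) by push_cast; ring] at this
  exact_mod_cast this

lemma sum_fiber (F : ℕ → ℂ) (N : ℕ) :
    ∑ j ∈ range (N + 1), ∑ k ∈ range (N + 1), F (j + k)
      = ∑ n ∈ range (2 * N + 1),
          (((range (N + 1) ×ˢ range (N + 1)).filter (fun p => p.1 + p.2 = n)).card : ℂ) * F n := by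
  rw [← Finset.sum_product']
  rw [← Finset.sum_fiberwise_of_maps_to (g := fun p : ℕ × ℕ => p.1 + p.2) (t := range (2 * N + 1))
    (fun p hp => by simp only [mem_product, mem_range] at hp ⊢; omega)]
  refine Finset.sum_congr rfl fun n _ => ?_
  rw [Finset.sum_congr rfl (fun p hp => by
    rw [show p.1 + p.2 = n from (Finset.mem_filter.1 hp).2])]
  rw [Finset.sum_const, nsmul_eq_mul]

lemma card_fiber (N n : ℕ) (h1 : N ≤ n) (h2 : n ≤ 2 * N) :
    ((range (N + 1) ×ˢ range (N + 1)).filter (fun p => p.1 + p.2 = n)).card = 2 * N + 1 - n := by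
  rw [← Finset.card_range (2 * N + 1 - n)]
  apply Finset.card_bij' (fun p _ => p.1 - (n - N)) (fun i _ => (n - N + i, N - i))
  · intro p hp
    simp only [Finset.mem_filter, mem_product, mem_range] at hp
    simp only [mem_range]
    omega
  · intro i hi
    simp only [mem_range] at hi
    simp only [Finset.mem_filter, mem_product, mem_range]
    omega
  · intro p hp
    simp only [Finset.mem_filter, mem_product, mem_range] at hp
    have h3 : n - N + (p.1 - (n - N)) = p.1 := by omega
    have h4 : N - (p.1 - (n - N)) = p.2 := by omega
    rw [Prod.ext_iff]
    exact ⟨h3, h4⟩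
  · intro i hi
    simp only [mem_range] at hi
    omega

def Kc (N n : ℕ) : ℕ :=
  ((range (N + 1) ×ˢ range (N + 1)).filter (fun p => p.1 + p.2 = n)).card


lemma sum_fiber' (F : ℕ → ℂ) (N : ℕ) :
    ∑ j ∈ range (N + 1), ∑ k ∈ range (N + 1), F (j + k)
      = ∑ n ∈ range (2 * N + 1), (Kc N n : ℂ) * F n :=
  sum_fiber F N

lemma card_fiber' (N n : ℕ) (h1 : N ≤ n) (h2 : n ≤ 2 * N) : Kc N n = 2 * N + 1 - n :=
  card_fiber N n h1 h2

lemma master (γ : ℕ → ℂ) (C : ℝ)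
    (hγ : ∀ (N : ℕ) (x y : ℕ → ℂ), (∀ j, ‖x j‖ ≤ 1) → (∀ k, ‖y k‖ ≤ 1) →
      ‖∑ j ∈ Finset.range (N + 1), ∑ k ∈ Finset.range (N + 1), γ (j + k) * x j * y k‖ ≤ C)
    (N : ℕ) :
    ∑ n ∈ Finset.Icc N (2 * N), ((2 * N + 1 - n : ℕ) : ℝ) ^ 2 * ‖γ n‖ ^ 2 ≤ C ^ 2 := by
  have hC : 0 ≤ C := le_trans (norm_nonneg _) (hγ 0 0 0 (by simp) (by simp))
  have hpar := parseval (2 * N + 1) (by omega) (fun n => (Kc N n : ℂ) * γ n)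
  have hb : ∀ r : ℕ, ‖∑ n ∈ range (2 * N + 1), ((Kc N n : ℂ) * γ n) *
      Complex.exp (2 * (Real.pi : ℂ) * I * (n * r) / (2 * N + 1 : ℕ))‖ ≤ C := by
    intro r
    set ω : ℂ := Complex.exp (2 * (Real.pi : ℂ) * I * r / (2 * N + 1 : ℕ)) with hω
    have hωnorm : ‖ω‖ = 1 := by
      rw [hω, show 2 * (Real.pi : ℂ) * I * r / (2 * N + 1 : ℕ)
          = ((2 * Real.pi * r / (2 * N + 1 : ℕ) : ℝ) : ℂ) * I by push_cast; ring]
      exact Complex.norm_exp_ofReal_mul_I _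
    have hx : ∀ j : ℕ, ‖ω ^ j‖ ≤ 1 := by
      intro j; rw [norm_pow, hωnorm, one_pow]
    have hsum : ∑ j ∈ range (N + 1), ∑ k ∈ range (N + 1), γ (j + k) * ω ^ j * ω ^ k
        = ∑ n ∈ range (2 * N + 1), ((Kc N n : ℂ) * γ n) *
            Complex.exp (2 * (Real.pi : ℂ) * I * (n * r) / (2 * N + 1 : ℕ)) := by
      calc ∑ j ∈ range (N + 1), ∑ k ∈ range (N + 1), γ (j + k) * ω ^ j * ω ^ k
          = ∑ j ∈ range (N + 1), ∑ k ∈ range (N + 1), (fun n => γ n * ω ^ n) (j + k) := by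
            refine Finset.sum_congr rfl fun j _ => Finset.sum_congr rfl fun k _ => ?_
            simp only [← pow_add]; ring
        _ = ∑ n ∈ range (2 * N + 1), (Kc N n : ℂ) * (γ n * ω ^ n) :=
            sum_fiber' (fun n => γ n * ω ^ n) N
        _ = ∑ n ∈ range (2 * N + 1), ((Kc N n : ℂ) * γ n) *
              Complex.exp (2 * (Real.pi : ℂ) * I * (n * r) / (2 * N + 1 : ℕ)) := by
            refine Finset.sum_congr rfl fun n _ => ?_
            have h2 : ω ^ n = Complex.exp (2 * (Real.pi : ℂ) * I * (n * r) / (2 * N + 1 : ℕ)) := by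
              rw [hω, ← Complex.exp_nat_mul]
              congr 1
              push_cast
              ring
            rw [h2]; ring
    rw [← hsum]
    exact hγ N (fun j => ω ^ j) (fun k => ω ^ k) hx hx
  have hsum2 : ∑ n ∈ range (2 * N + 1), ‖(Kc N n : ℂ) * γ n‖ ^ 2 ≤ C ^ 2 := by
    have h1 : ((2 * N + 1 : ℕ) : ℝ) * ∑ n ∈ range (2 * N + 1), ‖(Kc N n : ℂ) * γ n‖ ^ 2
        ≤ ((2 * N + 1 : ℕ) : ℝ) * C ^ 2 := by
      rw [← hpar]
      calc ∑ r ∈ range (2 * N + 1), ‖∑ n ∈ range (2 * N + 1), ((Kc N n : ℂ) * γ n) *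
            Complex.exp (2 * (Real.pi : ℂ) * I * (n * r) / (2 * N + 1 : ℕ))‖ ^ 2
          ≤ ∑ _r ∈ range (2 * N + 1), C ^ 2 :=
            Finset.sum_le_sum fun r _ => pow_le_pow_left₀ (norm_nonneg _) (hb r) 2
        _ = ((2 * N + 1 : ℕ) : ℝ) * C ^ 2 := by
            rw [Finset.sum_const, Finset.card_range, nsmul_eq_mul]
    have hMpos : (0 : ℝ) < ((2 * N + 1 : ℕ) : ℝ) := by positivity
    exact le_of_mul_le_mul_left h1 hMpos
  calc ∑ n ∈ Finset.Icc N (2 * N), ((2 * N + 1 - n : ℕ) : ℝ) ^ 2 * ‖γ n‖ ^ 2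
      = ∑ n ∈ Finset.Icc N (2 * N), ‖(Kc N n : ℂ) * γ n‖ ^ 2 := by
        refine Finset.sum_congr rfl fun n hn => ?_
        simp only [Finset.mem_Icc] at hn
        rw [norm_mul, Complex.norm_natCast, mul_pow, card_fiber' N n hn.1 hn.2]
    _ ≤ ∑ n ∈ range (2 * N + 1), ‖(Kc N n : ℂ) * γ n‖ ^ 2 := by
        refine Finset.sum_le_sum_of_subset_of_nonneg ?_ (fun n _ _ => by positivity)
        intro n hn
        simp only [Finset.mem_Icc] at hn
        simp only [mem_range]
        omega
    _ ≤ C ^ 2 := hsum2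

lemma L2 (γ : ℕ → ℂ) (C : ℝ)
    (hm : ∀ N : ℕ, ∑ n ∈ Finset.Icc N (2 * N), ((2 * N + 1 - n : ℕ) : ℝ) ^ 2 * ‖γ n‖ ^ 2 ≤ C ^ 2)
    (ε : ℝ) (hε : 0 < ε) (hε1 : ε ≤ 1) :
    Summable (fun n : ℕ => ‖γ n‖ ^ 2 * (1 + (n : ℝ)) ^ ((2 : ℝ) - ε)) := by
  set f : ℕ → ℝ := fun n => ‖γ n‖ ^ 2 * (1 + (n : ℝ)) ^ ((2 : ℝ) - ε) with hf
  have hfnn : ∀ n, 0 ≤ f n := fun n => by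
    apply mul_nonneg (by positivity)
    apply Real.rpow_nonneg
    positivity
  have hZsum : Summable (fun N : ℕ => ((N : ℝ)) ^ (-(1 + ε))) :=
    Real.summable_nat_rpow.2 (by linarith)
  set Z : ℝ := ∑' N : ℕ, ((N : ℝ)) ^ (-(1 + ε)) with hZ
  have hZnn : 0 ≤ Z := tsum_nonneg fun N => Real.rpow_nonneg (Nat.cast_nonneg N) _
  -- the weight function
  set F : ℕ → ℕ → ℝ := fun N n => ((N : ℝ)) ^ (-(1 + ε)) *
    (if N ≤ n ∧ n ≤ 2 * N then ((2 * N + 1 - n : ℕ) : ℝ) ^ 2 * ‖γ n‖ ^ 2 else 0) with hF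
  have hFnn : ∀ N n, 0 ≤ F N n := fun N n => by
    apply mul_nonneg (Real.rpow_nonneg (Nat.cast_nonneg N) _)
    split <;> positivity
  have hC2 : (0:ℝ) ≤ C ^ 2 := sq_nonneg C
  -- upper bound for column sums of F
  have hcol : ∀ (R' : ℕ) (N : ℕ), 1 ≤ N → ∑ i ∈ range R', F N (i + 1) ≤
      ((N : ℝ)) ^ (-(1 + ε)) * C ^ 2 := by
    intro R' N _
    rw [hF]
    simp only
    rw [← Finset.mul_sum]
    apply mul_le_mul_of_nonneg_left _ (Real.rpow_nonneg (Nat.cast_nonneg N) _)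
    set w : ℕ → ℝ := fun n => if N ≤ n ∧ n ≤ 2 * N then ((2 * N + 1 - n : ℕ) : ℝ) ^ 2 * ‖γ n‖ ^ 2 else 0 with hw
    have hwnn : ∀ n, 0 ≤ w n := fun n => by rw [hw]; dsimp only; split <;> positivity
    calc ∑ i ∈ range R', w (i + 1) ≤ ∑ i ∈ range (R' + 1), w i := by
          rw [Finset.sum_range_succ' w R']
          simpa using hwnn 0
      _ = ∑ i ∈ (range (R' + 1)).filter (fun n => N ≤ n ∧ n ≤ 2 * N),
            ((2 * N + 1 - i : ℕ) : ℝ) ^ 2 * ‖γ i‖ ^ 2 := (Finset.sum_filter _ _).symm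
      _ ≤ ∑ n ∈ Finset.Icc N (2 * N), ((2 * N + 1 - n : ℕ) : ℝ) ^ 2 * ‖γ n‖ ^ 2 := by
          apply Finset.sum_le_sum_of_subset_of_nonneg
          · intro i hi
            simp only [Finset.mem_filter, mem_range] at hi
            exact Finset.mem_Icc.2 hi.2
          · intro i _ _; positivity
      _ ≤ C ^ 2 := hm N
  -- lower bound: f n ≤ 64 * row sums
  have hrow : ∀ (R' : ℕ) (n : ℕ), 1 ≤ n → n ≤ R' →
      f n ≤ 64 * ∑ N ∈ Finset.Icc 1 R', F N n := by
    intro R' n hn1 hnR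
    have hn0 : (0 : ℝ) < n := by exact_mod_cast hn1
    set c0 : ℝ := ((n : ℝ)) ^ (-(1 + ε)) * (((n : ℝ) / 2) ^ 2 * ‖γ n‖ ^ 2) with hc0
    have hc0nn : 0 ≤ c0 := by positivity
    have hsub : Finset.Icc (n - n / 4) n ⊆ Finset.Icc 1 R' := by
      intro N hN
      simp only [Finset.mem_Icc] at hN ⊢
      omega
    have hterm : ∀ N ∈ Finset.Icc (n - n / 4) n, c0 ≤ F N n := by
      intro N hN
      simp only [Finset.mem_Icc] at hN
      have hcond : N ≤ n ∧ n ≤ 2 * N := ⟨hN.2, by omega⟩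
      rw [hF]
      simp only [if_pos hcond]
      have hNpos : (0:ℝ) < N := by exact_mod_cast (show 0 < N by omega)
      have hn1R : (1:ℝ) ≤ n := by exact_mod_cast hn1
      apply mul_le_mul
      · apply Real.rpow_le_rpow_of_nonpos hNpos (by exact_mod_cast hN.2) (by linarith)
      · apply mul_le_mul_of_nonneg_right _ (by positivity)
        apply pow_le_pow_left₀ (by positivity)
        have h1 : n ≤ 2 * (2 * N + 1 - n) := by omega
        have h2 : (n : ℝ) ≤ 2 * ((2 * N + 1 - n : ℕ) : ℝ) := by exact_mod_cast h1
        linarith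
      · positivity
      · exact Real.rpow_nonneg (Nat.cast_nonneg N) _
    have hcard : (Finset.Icc (n - n / 4) n).card = n / 4 + 1 := by
      rw [Nat.card_Icc]; omega
    have hS : (n : ℝ) / 4 * c0 ≤ ∑ N ∈ Finset.Icc 1 R', F N n := by
      calc (n : ℝ) / 4 * c0 ≤ ((n / 4 + 1 : ℕ) : ℝ) * c0 := by
            apply mul_le_mul_of_nonneg_right _ hc0nn
            have : n ≤ 4 * (n / 4 + 1) := by omega
            have := (Nat.cast_le (α := ℝ)).2 this
            push_cast at this ⊢
            linarith
        _ = (Finset.Icc (n - n / 4) n).card • c0 := by rw [hcard, nsmul_eq_mul]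
        _ ≤ ∑ N ∈ Finset.Icc (n - n / 4) n, F N n := Finset.card_nsmul_le_sum _ _ _ hterm
        _ ≤ ∑ N ∈ Finset.Icc 1 R', F N n :=
            Finset.sum_le_sum_of_subset_of_nonneg hsub (fun N _ _ => hFnn N n)
    -- now bound f n
    have hpow : (1 + (n : ℝ)) ^ ((2 : ℝ) - ε) ≤ 4 * ((n : ℝ) ^ 3 * ((n : ℝ)) ^ (-(1 + ε))) := by
      have hn1R : (1:ℝ) ≤ n := by exact_mod_cast hn1
      have h1 : (1 + (n : ℝ)) ^ ((2 : ℝ) - ε) ≤ (2 * (n : ℝ)) ^ ((2 : ℝ) - ε) := by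
        apply Real.rpow_le_rpow (by positivity) (by linarith) (by linarith)
      have h2 : (2 * (n : ℝ)) ^ ((2 : ℝ) - ε) = 2 ^ ((2 : ℝ) - ε) * (n : ℝ) ^ ((2 : ℝ) - ε) :=
        Real.mul_rpow (by norm_num) (by positivity)
      have h3 : (2 : ℝ) ^ ((2 : ℝ) - ε) ≤ 4 := by
        calc (2 : ℝ) ^ ((2 : ℝ) - ε) ≤ 2 ^ (2 : ℝ) :=
            Real.rpow_le_rpow_of_exponent_le (by norm_num) (by linarith)
          _ = 4 := by
            rw [show (2 : ℝ) = ((2 : ℕ) : ℝ) by norm_num, Real.rpow_natCast]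
            norm_num
      have h4 : (n : ℝ) ^ ((2 : ℝ) - ε) = (n : ℝ) ^ 3 * ((n : ℝ)) ^ (-(1 + ε)) := by
        rw [show ((2 : ℝ) - ε) = 3 + (-(1 + ε)) by ring, Real.rpow_add hn0]
        congr 1
        rw [show (3 : ℝ) = ((3 : ℕ) : ℝ) by norm_num, Real.rpow_natCast]
      calc (1 + (n : ℝ)) ^ ((2 : ℝ) - ε) ≤ 2 ^ ((2 : ℝ) - ε) * (n : ℝ) ^ ((2 : ℝ) - ε) := by
            rw [← h2]; exact h1
        _ ≤ 4 * (n : ℝ) ^ ((2 : ℝ) - ε) := by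
            apply mul_le_mul_of_nonneg_right h3 (Real.rpow_nonneg (by positivity) _)
        _ = 4 * ((n : ℝ) ^ 3 * ((n : ℝ)) ^ (-(1 + ε))) := by rw [h4]
    calc f n = ‖γ n‖ ^ 2 * (1 + (n : ℝ)) ^ ((2 : ℝ) - ε) := rfl
      _ ≤ ‖γ n‖ ^ 2 * (4 * ((n : ℝ) ^ 3 * ((n : ℝ)) ^ (-(1 + ε)))) :=
          mul_le_mul_of_nonneg_left hpow (by positivity)
      _ = 64 * ((n : ℝ) / 4 * c0) := by rw [hc0]; ring
      _ ≤ 64 * ∑ N ∈ Finset.Icc 1 R', F N n := by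
          apply mul_le_mul_of_nonneg_left hS (by norm_num)
  -- put it together
  apply summable_of_sum_range_le hfnn (c := C ^ 2 + 64 * (C ^ 2 * Z))
  intro R
  match R with
  | 0 => simp; positivity
  | (R' + 1) =>
    rw [Finset.sum_range_succ' f R']
    have hf0 : f 0 ≤ C ^ 2 := by
      have h := hm 0
      norm_num at h
      rw [hf]
      simp only [Nat.cast_zero, add_zero, Real.one_rpow, mul_one]
      exact h
    have hmain : ∑ i ∈ range R', f (i + 1) ≤ 64 * (C ^ 2 * Z) := by
      calc ∑ i ∈ range R', f (i + 1)
          ≤ ∑ i ∈ range R', 64 * ∑ N ∈ Finset.Icc 1 R', F N (i + 1) :=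
            Finset.sum_le_sum fun i hi => by
              apply hrow R' (i + 1) (by omega)
              simp only [mem_range] at hi; omega
        _ = 64 * ∑ N ∈ Finset.Icc 1 R', ∑ i ∈ range R', F N (i + 1) := by
            rw [← Finset.mul_sum, Finset.sum_comm]
        _ ≤ 64 * ∑ N ∈ Finset.Icc 1 R', ((N : ℝ)) ^ (-(1 + ε)) * C ^ 2 := by
            apply mul_le_mul_of_nonneg_left _ (by norm_num)
            apply Finset.sum_le_sum
            intro N hN
            exact hcol R' N (Finset.mem_Icc.1 hN).1
        _ ≤ 64 * (C ^ 2 * Z) := by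
            apply mul_le_mul_of_nonneg_left _ (by norm_num)
            rw [← Finset.sum_mul]
            rw [mul_comm (C^2) Z]
            apply mul_le_mul_of_nonneg_right _ hC2
            exact Summable.sum_le_tsum _ (fun N _ => Real.rpow_nonneg (Nat.cast_nonneg N) _) hZsum
    linarith

lemma summable_shift (q : ℝ) (hq : q < -1) : Summable (fun n : ℕ => (1 + (n : ℝ)) ^ q) := by
  have h := Real.summable_nat_rpow.2 hq
  have h2 := (summable_nat_add_iff 1).2 h
  refine h2.congr fun n => ?_
  have : (((n + 1 : ℕ) : ℝ)) = 1 + (n : ℝ) := by push_cast; ring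
  rw [this]

/-- Theorem 6.7 (i) of [PS]: for `t > 0` and `β < Ψ(t)`, every Hankel matrix in `ℓ¹ ⊗̌ ℓ¹`
satisfies `∑_k |γ_k|^t (1+k)^β < ∞`. -/
theorem hankel_inj_weighted_summable_of_lt_Psi (t β : ℝ) (ht : 0 < t) (hβ : β < Psi t)
    (γ : ℕ → ℂ) (hγ : HankelInInj γ) :
    Summable fun k : ℕ => ‖γ k‖ ^ t * (1 + (k : ℝ)) ^ β := by
  obtain ⟨C, hγC⟩ := hγ
  have hC : 0 ≤ C := le_trans (norm_nonneg _) (hγC 0 0 0 (by simp) (by simp))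
  have hm := master γ C hγC
  -- pointwise bound
  have hpt : ∀ n : ℕ, ‖γ n‖ * (1 + (n : ℝ)) ≤ C := by
    intro n
    have h1 : ((2 * n + 1 - n : ℕ) : ℝ) ^ 2 * ‖γ n‖ ^ 2 ≤ C ^ 2 := by
      refine le_trans (Finset.single_le_sum (f := fun m => ((2 * n + 1 - m : ℕ) : ℝ) ^ 2 * ‖γ m‖ ^ 2)
        (fun m _ => by positivity) ?_) (hm n)
      simp only [Finset.mem_Icc]; omega
    have h2 : ((2 * n + 1 - n : ℕ) : ℝ) = 1 + (n : ℝ) := by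
      have : 2 * n + 1 - n = n + 1 := by omega
      rw [this]; push_cast; ring
    rw [h2] at h1
    have h3 : (‖γ n‖ * (1 + (n : ℝ))) ^ 2 ≤ C ^ 2 := by
      calc (‖γ n‖ * (1 + (n : ℝ))) ^ 2 = (1 + (n : ℝ)) ^ 2 * ‖γ n‖ ^ 2 := by ring
        _ ≤ C ^ 2 := h1
    exact (pow_le_pow_iff_left₀ (by positivity) hC (by norm_num)).1 h3
  have hnn : ∀ k : ℕ, (0 : ℝ) ≤ ‖γ k‖ ^ t * (1 + (k : ℝ)) ^ β := by
    intro k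
    apply mul_nonneg (Real.rpow_nonneg (norm_nonneg _) _) (Real.rpow_nonneg (by positivity) _)
  by_cases h2 : t ≤ 2
  · -- case t ≤ 2
    rw [Psi, if_pos h2] at hβ
    set β' := max β (3 / 2 * t - 2) with hβ'def
    have hββ' : β ≤ β' := le_max_left _ _
    have hβ'lt : β' < 3 / 2 * t - 1 := max_lt hβ (by linarith)
    set ε := 3 / 2 * t - 1 - β' with hεdef
    have hε : 0 < ε := by simp only [hεdef]; linarith
    have hε1 : ε ≤ 1 := by
      have : 3 / 2 * t - 2 ≤ β' := le_max_right _ _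
      simp only [hεdef]; linarith
    have hL2 := L2 γ C hm ε hε hε1
    have hsecond : Summable (fun k : ℕ => (1 + (k : ℝ)) ^ (β' - 3 / 2 * t)) :=
      summable_shift _ (by simp only [hεdef] at hε ⊢; linarith)
    apply Summable.of_nonneg_of_le hnn _ (hL2.add hsecond)
    intro k
    have hu1 : (1 : ℝ) ≤ 1 + (k : ℝ) := le_add_of_nonneg_right (Nat.cast_nonneg k)
    have hu0 : (0 : ℝ) < 1 + (k : ℝ) := by positivity
    have hwt : (1 + (k : ℝ)) ^ β ≤ (1 + (k : ℝ)) ^ β' :=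
      Real.rpow_le_rpow_of_exponent_le hu1 hββ'
    have step1 : ‖γ k‖ ^ t * (1 + (k : ℝ)) ^ β ≤ ‖γ k‖ ^ t * (1 + (k : ℝ)) ^ β' :=
      mul_le_mul_of_nonneg_left hwt (Real.rpow_nonneg (norm_nonneg _) _)
    refine le_trans step1 ?_
    set a := ‖γ k‖ with ha
    have ha0 : 0 ≤ a := norm_nonneg _
    set u := 1 + (k : ℝ) with hu
    set τ := u ^ (-(3 / 2) : ℝ) with hτ
    have hτ0 : 0 < τ := Real.rpow_pos_of_pos hu0 _
    have hτt : τ ^ t = u ^ (-(3 / 2) * t) := by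
      rw [hτ, ← Real.rpow_mul (le_of_lt hu0)]
    by_cases hcase : a ≤ τ
    · -- small a
      have h4 : a ^ t ≤ τ ^ t := Real.rpow_le_rpow ha0 hcase (le_of_lt ht)
      have h5 : a ^ t * u ^ β' ≤ u ^ (-(3 / 2) * t) * u ^ β' := by
        apply mul_le_mul_of_nonneg_right _ (Real.rpow_nonneg (le_of_lt hu0) _)
        rw [← hτt]; exact h4
      have h6 : u ^ (-(3 / 2) * t) * u ^ β' = u ^ (β' - 3 / 2 * t) := by
        rw [← Real.rpow_add hu0]; ring_nf
      calc a ^ t * u ^ β' ≤ u ^ (β' - 3 / 2 * t) := by rw [← h6]; exact h5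
        _ ≤ a ^ 2 * u ^ ((2 : ℝ) - ε) + u ^ (β' - 3 / 2 * t) := by
            have : 0 ≤ a ^ 2 * u ^ ((2 : ℝ) - ε) := by
              apply mul_nonneg (by positivity) (Real.rpow_nonneg (le_of_lt hu0) _)
            linarith
    · -- large a
      push_neg at hcase
      have ha0' : 0 < a := lt_trans hτ0 hcase
      have h4 : a ^ t = a ^ (2 : ℝ) * a ^ (t - 2) := by
        rw [← Real.rpow_add ha0']; ring_nf
      have h5 : a ^ (t - 2) ≤ τ ^ (t - 2) :=
        Real.rpow_le_rpow_of_nonpos hτ0 (le_of_lt hcase) (by linarith)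
      have h6 : τ ^ (t - 2) = u ^ (-(3 / 2) * (t - 2)) := by
        rw [hτ, ← Real.rpow_mul (le_of_lt hu0)]
      have h7 : a ^ t * u ^ β' ≤ a ^ (2 : ℝ) * (u ^ (-(3 / 2) * (t - 2)) * u ^ β') := by
        rw [h4]
        calc a ^ (2 : ℝ) * a ^ (t - 2) * u ^ β'
            ≤ a ^ (2 : ℝ) * τ ^ (t - 2) * u ^ β' := by
              apply mul_le_mul_of_nonneg_right _ (Real.rpow_nonneg (le_of_lt hu0) _)
              exact mul_le_mul_of_nonneg_left h5 (Real.rpow_nonneg ha0 _)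
          _ = a ^ (2 : ℝ) * (u ^ (-(3 / 2) * (t - 2)) * u ^ β') := by rw [h6]; ring
      have h8 : u ^ (-(3 / 2) * (t - 2)) * u ^ β' = u ^ ((2 : ℝ) - ε) := by
        rw [← Real.rpow_add hu0]
        congr 1
        simp only [hεdef]
        ring
      have h9 : a ^ (2 : ℝ) = a ^ 2 := by
        rw [show (2 : ℝ) = ((2 : ℕ) : ℝ) by norm_num, Real.rpow_natCast]
      calc a ^ t * u ^ β' ≤ a ^ 2 * u ^ ((2 : ℝ) - ε) := by
            rw [← h9, ← h8]; exact h7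
        _ ≤ a ^ 2 * u ^ ((2 : ℝ) - ε) + u ^ (β' - 3 / 2 * t) := by
            have : 0 ≤ u ^ (β' - 3 / 2 * t) := Real.rpow_nonneg (le_of_lt hu0) _
            linarith
  · -- case t > 2
    push_neg at h2
    rw [Psi, if_neg (not_le.2 h2)] at hβ
    set β' := max β (t - 1) with hβ'def
    have hββ' : β ≤ β' := le_max_left _ _
    have hβ'lt : β' < t := max_lt hβ (by linarith)
    set ε := t - β' with hεdef
    have hε : 0 < ε := by simp only [hεdef]; linarith
    have hε1 : ε ≤ 1 := by
      have : t - 1 ≤ β' := le_max_right _ _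
      simp only [hεdef]; linarith
    have hL2 := L2 γ C hm ε hε hε1
    apply Summable.of_nonneg_of_le hnn _ ((hL2.mul_left (C ^ (t - 2))).congr (fun n => rfl))
    intro k
    set a := ‖γ k‖ with ha
    have ha0 : 0 ≤ a := norm_nonneg _
    set u := 1 + (k : ℝ) with hu
    have hu0 : (0 : ℝ) < u := by positivity
    have hu1 : (1 : ℝ) ≤ u := by simp only [hu]; exact le_add_of_nonneg_right (Nat.cast_nonneg k)
    have hwt : u ^ β ≤ u ^ β' := Real.rpow_le_rpow_of_exponent_le hu1 hββ'
    have haC : a ≤ C / u := by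
      rw [le_div_iff₀ hu0]
      exact hpt k
    have h4 : a ^ t = a ^ (t - 2) * a ^ (2 : ℝ) := by
      rw [← Real.rpow_add' ha0 (by intro h; linarith [show t - 2 + 2 = t by ring] : t - 2 + 2 ≠ 0)]
      norm_num
    have h5 : a ^ (t - 2) ≤ (C / u) ^ (t - 2) :=
      Real.rpow_le_rpow ha0 haC (by linarith)
    have h6 : (C / u) ^ (t - 2) = C ^ (t - 2) / u ^ (t - 2) :=
      Real.div_rpow hC (le_of_lt hu0) _
    have h9 : a ^ (2 : ℝ) = a ^ 2 := by
      rw [show (2 : ℝ) = ((2 : ℕ) : ℝ) by norm_num, Real.rpow_natCast]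
    calc a ^ t * u ^ β ≤ a ^ t * u ^ β' :=
          mul_le_mul_of_nonneg_left hwt (Real.rpow_nonneg ha0 _)
      _ = a ^ (t - 2) * (a ^ 2 * u ^ β') := by rw [h4, h9]; ring
      _ ≤ (C ^ (t - 2) / u ^ (t - 2)) * (a ^ 2 * u ^ β') := by
          apply mul_le_mul_of_nonneg_right _ (by positivity)
          rw [← h6]; exact h5
      _ = C ^ (t - 2) * (a ^ 2 * (u ^ β' / u ^ (t - 2))) := by ring
      _ = C ^ (t - 2) * (a ^ 2 * u ^ ((2 : ℝ) - ε)) := by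
          rw [← Real.rpow_sub hu0]
          congr 3
          simp only [hεdef]
          ring
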